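/- arXiv:2312.14778 — 2 statements merged into one kernel-verified Lean document; each statement's English description precedes it below -/
import Mathlib

section
/- Vandermonde-type inequality for falling factorials: for real numbers x, y ≥ 0 and natural numbers a ≤ x, b ≤ y, one has C(a+b, a) · x^{falling a} · y^{falling b} ≤ (x+y)^{falling (a+b)}. -/
open Finset

/-- Falling factorial `x(x-1)⋯(x-n+1)`. -/
noncomputable def fallingF (x : ℝ) (n : ℕ) : ℝ := ∏ i ∈ Finset.range n, (x - (i : ℝ))

lemma fallingF_succ (x : ℝ) (n : ℕ) : fallingF x (n+1) = fallingF x n * (x - n) :=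
  Finset.prod_range_succ _ _

lemma fallingF_nonneg {x : ℝ} {n : ℕ} (h : (n:ℝ) ≤ x) : 0 ≤ fallingF x n := by
  apply Finset.prod_nonneg
  intro i hi
  simp only [Finset.mem_range] at hi
  have : (i:ℝ) + 1 ≤ n := by exact_mod_cast hi
  linarith

lemma fallingF_le {x y : ℝ} {n : ℕ} (hx : 0 ≤ x) (h : (n:ℝ) ≤ y) :
    fallingF y n ≤ fallingF (x+y) n := by
  apply Finset.prod_le_prod
  · intro i hi
    simp only [Finset.mem_range] at hi
    have : (i:ℝ) + 1 ≤ n := by exact_mod_cast hi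
    linarith
  · intro i _; linarith

/-- Pascal-type decomposition of a window sum at level `n+1` in terms of level `n`. -/
lemma core (x y : ℝ) (n m a : ℕ) (hma : m < a) (han : a ≤ n+1) :
    ∑ k ∈ Finset.Icc (m+1) a, ((n+1).choose k : ℝ) * fallingF x k * fallingF y (n+1-k)
    = ∑ j ∈ Finset.Icc m (a-1), (x - j) * ((n.choose j : ℝ) * fallingF x j * fallingF y (n-j))
      + ∑ k ∈ Finset.Icc (m+1) a,
          (y - ((n-k : ℕ) : ℝ)) * ((n.choose k : ℝ) * fallingF x k * fallingF y (n-k)) := by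
  have ha1 : a - 1 + 1 = a := by omega
  have hreidx : ∀ f : ℕ → ℝ, ∑ k ∈ Finset.Icc (m+1) a, f k = ∑ j ∈ Finset.Icc m (a-1), f (j+1) := by
    intro f
    rw [show Finset.Icc (m+1) a = Finset.image (· + 1) (Finset.Icc m (a-1)) by
      rw [Finset.image_add_right_Icc, ha1]]
    rw [Finset.sum_image (by intro p _ q _ h; have h' : p + 1 = q + 1 := h; omega)]
  rw [hreidx, hreidx, ← Finset.sum_add_distrib]
  apply Finset.sum_congr rfl
  intro j hj
  simp only [Finset.mem_Icc] at hj
  have hjn : j ≤ n := by omega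
  have h1 : n + 1 - (j+1) = n - j := by omega
  rw [h1, Nat.choose_succ_succ, fallingF_succ]
  push_cast
  rcases Nat.lt_or_ge j n with hlt | hge
  · have h2 : n - j = (n - (j+1)) + 1 := by omega
    rw [h2, fallingF_succ]
    have h3 : ((n - (j+1) : ℕ) : ℝ) = (n : ℝ) - j - 1 := by
      have : ((n - (j+1) : ℕ) : ℝ) = ((n:ℝ) - (j+1)) := by
        push_cast [Nat.cast_sub (by omega : j+1 ≤ n)]; ring
      rw [this]; ring
    rw [h3]
    ring
  · have hje : j = n := by omega
    subst hje
    simp [Nat.choose_succ_self]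
    ring

lemma window (x y : ℝ) (n : ℕ) : ∀ a' a : ℕ, a' ≤ a → a ≤ n → (a:ℝ) ≤ x →
    ((n - a' : ℕ):ℝ) ≤ y →
    ∑ k ∈ Finset.Icc a' a, (n.choose k : ℝ) * fallingF x k * fallingF y (n-k)
      ≤ fallingF (x+y) n := by
  induction n with
  | zero =>
    intro a' a h1 h2 hx hy
    have ha : a = 0 := by omega
    have ha' : a' = 0 := by omega
    subst ha; subst ha'
    simp [fallingF]
  | succ n ih =>
    intro a' a ha'a han hx hy
    have hx0 : (0:ℝ) ≤ x := le_trans (by positivity) hx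
    set t : ℕ → ℝ := fun j => (n.choose j : ℝ) * fallingF x j * fallingF y (n-j) with ht_def
    set l : ℕ := a' - 1 with hl_def
    -- basic cast facts
    have hcastx : ∀ j : ℕ, j ≤ a → (j:ℝ) ≤ x := fun j hj =>
      le_trans (by exact_mod_cast hj) hx
    have hcasty : ∀ j : ℕ, l ≤ j → ((n - j : ℕ):ℝ) ≤ y := by
      intro j hj
      refine le_trans ?_ hy
      exact_mod_cast (by omega : n - j ≤ n + 1 - a')
    have htnn : ∀ j ∈ Finset.Icc l a, 0 ≤ t j := by
      intro j hj
      simp only [Finset.mem_Icc] at hj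
      have h1 : 0 ≤ fallingF x j := fallingF_nonneg (hcastx j hj.2)
      have h2 : 0 ≤ fallingF y (n - j) := fallingF_nonneg (hcasty j hj.1)
      positivity
    rcases Nat.eq_zero_or_pos a with ha0 | hapos
    · -- a = 0, a' = 0 : single term k = 0
      have ha' : a' = 0 := by omega
      subst ha0; subst ha'
      simp only [Finset.Icc_self, Finset.sum_singleton, Nat.choose_zero_right,
        Nat.cast_one, Nat.sub_zero]
      have hny : ((n+1 : ℕ):ℝ) ≤ y := by exact_mod_cast hy
      have := fallingF_le (n := n+1) hx0 hny
      have h0 : fallingF x 0 = 1 := by simp [fallingF]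
      rw [h0]
      push_cast at this ⊢
      linarith
    · -- a ≥ 1
      have key : ∑ k ∈ Finset.Icc a' a, ((n+1).choose k : ℝ) * fallingF x k * fallingF y (n+1-k)
          = ∑ j ∈ Finset.Icc l (a-1), (x - j) * t j
            + ∑ k ∈ Finset.Icc a' a, (y - ((n-k : ℕ):ℝ)) * t k := by
        rcases Nat.eq_zero_or_pos a' with ha'0 | ha'pos
        · subst ha'0
          have hsplit : ∀ f : ℕ → ℝ,
              ∑ k ∈ Finset.Icc 0 a, f k = f 0 + ∑ k ∈ Finset.Icc 1 a, f k := by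
            intro f
            rw [show Finset.Icc 0 a = insert 0 (Finset.Icc 1 a) from by
              ext k; simp only [Finset.mem_Icc, Finset.mem_insert]; omega]
            rw [Finset.sum_insert (by simp)]
          rw [hsplit, hsplit, core x y n 0 a hapos han]
          have hl0 : l = 0 := by omega
          rw [hl0]
          have h00 : ((n+1).choose 0 : ℝ) * fallingF x 0 * fallingF y (n+1-0)
              = (y - ((n - 0 : ℕ):ℝ)) * t 0 := by
            simp only [Nat.choose_zero_right, Nat.cast_one, Nat.sub_zero, ht_def]
            rw [fallingF_succ]
            simp [fallingF]
            ring
          rw [h00]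
          ring
        · have hmm : a' - 1 + 1 = a' := by omega
          calc ∑ k ∈ Finset.Icc a' a, ((n+1).choose k : ℝ) * fallingF x k * fallingF y (n+1-k)
              = ∑ k ∈ Finset.Icc (l+1) a, ((n+1).choose k : ℝ) * fallingF x k * fallingF y (n+1-k) := by
                rw [hl_def, hmm]
            _ = _ := by
                rw [core x y n l a (by omega) han, hl_def, hmm]
      rw [key, fallingF_succ]
      have h5 : ∑ j ∈ Finset.Icc l (a-1), (x - j) * t j
          ≤ ∑ j ∈ Finset.Icc l a, (x - j) * t j := by
        apply Finset.sum_le_sum_of_subset_of_nonneg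
          (Finset.Icc_subset_Icc_right (by omega))
        intro j hj _
        have h1 : 0 ≤ x - j := by
          have := hcastx j (Finset.mem_Icc.mp hj).2; linarith
        exact mul_nonneg h1 (htnn j hj)
      have h6 : ∑ k ∈ Finset.Icc a' a, (y - ((n-k : ℕ):ℝ)) * t k
          ≤ ∑ k ∈ Finset.Icc l a, (y - ((n-k : ℕ):ℝ)) * t k := by
        apply Finset.sum_le_sum_of_subset_of_nonneg
          (Finset.Icc_subset_Icc_left (by omega))
        intro k hk _
        have h1 : 0 ≤ y - ((n-k : ℕ):ℝ) := by
          have := hcasty k (Finset.mem_Icc.mp hk).1; linarith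
        exact mul_nonneg h1 (htnn k hk)
      have h7 : ∑ j ∈ Finset.Icc l a, (x - j) * t j
            + ∑ k ∈ Finset.Icc l a, (y - ((n-k : ℕ):ℝ)) * t k
          = (x + y - n) * ∑ j ∈ Finset.Icc l a, t j := by
        rw [← Finset.sum_add_distrib, Finset.mul_sum]
        apply Finset.sum_congr rfl
        intro j hj
        simp only [Finset.mem_Icc] at hj
        rcases le_or_gt j n with hjn | hjn
        · have : ((n - j : ℕ):ℝ) = (n:ℝ) - j := by
            push_cast [Nat.cast_sub hjn]; ring
          rw [this]; ring
        · have hje : j = n + 1 := by omega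
          have : t j = 0 := by
            rw [ht_def]; simp [hje, Nat.choose_succ_self]
          rw [this]; ring
      have h8 : ∑ j ∈ Finset.Icc l a, t j ≤ fallingF (x+y) n := by
        rcases le_or_gt a n with hle | hgt
        · exact ih l a (by omega) hle hx (hcasty l le_rfl)
        · have hae : a = n + 1 := by omega
          subst hae
          rw [Finset.sum_Icc_succ_top (by omega : l ≤ n + 1)]
          have h0 : t (n+1) = 0 := by rw [ht_def]; simp [Nat.choose_succ_self]
          rw [h0, add_zero]
          refine ih l n (by omega) le_rfl ?_ (hcasty l le_rfl)
          have : ((n:ℝ)) ≤ (n:ℝ) + 1 := by linarith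
          exact le_trans this (by exact_mod_cast hx)
      have h9 : (0:ℝ) ≤ x + y - n := by
        have h1 : ((n + 1 - a' : ℕ):ℝ) = (n:ℝ) + 1 - a' := by
          push_cast [Nat.cast_sub (by omega : a' ≤ n + 1)]; ring
        have h2 : (a':ℝ) ≤ x := hcastx a' ha'a
        rw [h1] at hy
        linarith
      calc ∑ j ∈ Finset.Icc l (a-1), (x - j) * t j
            + ∑ k ∈ Finset.Icc a' a, (y - ((n-k : ℕ):ℝ)) * t k
          ≤ (x + y - n) * ∑ j ∈ Finset.Icc l a, t j := by
            rw [← h7]; exact add_le_add h5 h6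
        _ ≤ (x + y - n) * fallingF (x+y) n := by
            apply mul_le_mul_of_nonneg_left h8 h9
        _ = fallingF (x+y) n * (x + y - n) := by ring

/-- Vandermonde-type inequality:
`C(a+b, a) · x^{falling a} · y^{falling b} ≤ (x+y)^{falling (a+b)}`. -/
theorem choose_mul_fallingF_le (x y : ℝ) (hx : 0 ≤ x) (hy : 0 ≤ y) (a b : ℕ)
    (ha : (a : ℝ) ≤ x) (hb : (b : ℝ) ≤ y) :
    ((a + b).choose a : ℝ) * fallingF x a * fallingF y b ≤ fallingF (x + y) (a + b) := by
  have h := window x y (a + b) a a le_rfl (Nat.le_add_right a b) ha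
    (by rwa [show a + b - a = b by omega])
  rwa [Finset.Icc_self, Finset.sum_singleton, show a + b - a = b by omega] at h
end

section
/- Bound on G_{s,r}: let s be a natural number, r an even natural number with 6 ≤ r ≤ s, and v, k integers with k ≥ 2s+1, v - k ≥ 2s+1 (hence v ≥ 4s+2). Define G_{s,r} := ((v-k-s)^{rising (r/2)} (k-s)^{rising (s - r/2 + 1)} (k-s)^{rising (s-r+1)}) / ((v-2s+1)^{rising s} (v-2s+1)^{rising (s - r/2)}). Then 2·ln G_{s,r} ≤ -(r-4)·ln(v-2s+1) - 2·ln C(2s-r+2, r/2) + 2(s-r)·ln 2. -/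
open Finset Real

set_option maxHeartbeats 1000000

/-- Rising factorial `x(x+1)⋯(x+n-1)`. -/
noncomputable def risingF (x : ℝ) (n : ℕ) : ℝ := ∏ i ∈ Finset.range n, (x + (i : ℝ))

lemma risingF_zero (x : ℝ) : risingF x 0 = 1 := by simp [risingF]

lemma risingF_succ_eq (x : ℝ) (n N : ℕ) (h : n + 1 = N) :
    risingF x N = risingF x n * (x + n) := by
  subst h; rw [risingF, risingF, Finset.prod_range_succ]

lemma risingF_succ'_eq (x y : ℝ) (n N : ℕ) (hN : n + 1 = N) (hy : x + 1 = y) :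
    risingF x N = x * risingF y n := by
  subst hN; subst hy
  rw [risingF, Finset.prod_range_succ']
  rw [Finset.prod_congr rfl (fun i _ => show x + ((i+1 : ℕ) : ℝ) = (x+1) + i by push_cast; ring)]
  rw [risingF]
  push_cast
  ring

lemma risingF_add_eq (x y : ℝ) (a b N : ℕ) (hN : a + b = N) (hy : x + (a : ℝ) = y) :
    risingF x N = risingF x a * risingF y b := by
  subst hN; subst hy
  rw [risingF, risingF, risingF, Finset.prod_range_add]
  congr 1
  exact Finset.prod_congr rfl (fun i _ => by push_cast; ring)

lemma risingF_pos {x : ℝ} (hx : 0 < x) (n : ℕ) : 0 < risingF x n := by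
  apply Finset.prod_pos
  intro i _
  have : (0:ℝ) ≤ i := Nat.cast_nonneg i
  linarith

lemma risingF_nonneg {x : ℝ} (hx : 0 ≤ x) (n : ℕ) : 0 ≤ risingF x n := by
  apply Finset.prod_nonneg
  intro i _
  have : (0:ℝ) ≤ i := Nat.cast_nonneg i
  linarith

lemma risingF_mono {x y : ℝ} (hx : 0 ≤ x) (h : x ≤ y) (n : ℕ) :
    risingF x n ≤ risingF y n := by
  apply Finset.prod_le_prod
  · intro i _; have : (0:ℝ) ≤ i := Nat.cast_nonneg i; linarith
  · intro i _; linarith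

lemma pow_le_risingF {x y : ℝ} (hx : 0 ≤ x) (h : x ≤ y) (n : ℕ) :
    x ^ n ≤ risingF y n := by
  rw [show x ^ n = ∏ _i ∈ Finset.range n, x by simp]
  apply Finset.prod_le_prod
  · intro i _; exact hx
  · intro i _; have : (0:ℝ) ≤ i := Nat.cast_nonneg i; linarith

lemma vander (x y : ℝ) (hx : 0 < x) (hy : 0 < y) :
    ∀ (n p q : ℕ), p + q = n →
      ((n.choose p : ℝ)) * (risingF x p * risingF y q) ≤ risingF (x+y) n := by
  intro n
  induction n with
  | zero =>
    intro p q h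
    obtain rfl : p = 0 := by omega
    obtain rfl : q = 0 := by omega
    simp [risingF_zero]
  | succ n ih =>
    intro p q h
    rcases p with _ | p'
    · obtain rfl : q = n+1 := by omega
      rw [Nat.choose_zero_right, risingF_zero]
      rw [Nat.cast_one, one_mul, one_mul]
      exact risingF_mono hy.le (by linarith) _
    · rcases q with _ | q'
      · obtain rfl : p' = n := by omega
        rw [Nat.choose_self, risingF_zero, Nat.cast_one, one_mul, mul_one]
        exact risingF_mono hx.le (by linarith) _
      · have hn : p' + 1 + q' = n := by omega
        have h1 := ih p' (q'+1) (by omega)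
        have h2 := ih (p'+1) q' (by omega)
        have hxp : (0:ℝ) ≤ x + p' := by have : (0:ℝ) ≤ p' := Nat.cast_nonneg p'; linarith
        have hyq : (0:ℝ) ≤ y + q' := by have : (0:ℝ) ≤ q' := Nat.cast_nonneg q'; linarith
        have h1' := mul_le_mul_of_nonneg_right h1 hxp
        have h2' := mul_le_mul_of_nonneg_right h2 hyq
        have hR : (0:ℝ) ≤ risingF (x+y) n := (risingF_pos (by linarith) n).le
        rw [Nat.choose_succ_succ]
        push_cast
        rw [risingF_succ_eq (x+y) n (n+1) rfl]
        rw [risingF_succ_eq x p' (p'+1) rfl, risingF_succ_eq y q' (q'+1) rfl]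
        rw [risingF_succ_eq y q' (q'+1) rfl] at h1'
        rw [risingF_succ_eq x p' (p'+1) rfl] at h2'
        have hsum : x + (p':ℝ) + (y + (q':ℝ)) ≤ x + y + (n:ℝ) := by
          have : ((p':ℝ) + 1 + q') = n := by exact_mod_cast congrArg (Nat.cast (R := ℝ)) hn
          linarith
        nlinarith [mul_le_mul_of_nonneg_left hsum hR]

lemma main_real (e d : ℕ) (a b m : ℝ)
    (ha : 2*((e:ℝ)+3) + d + 1 ≤ a) (hb : 2*((e:ℝ)+3) + d + 1 ≤ b)
    (hab : a + b = m - 1) :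
    risingF a (e+3) * risingF b (e+d+4) * risingF b (d+1) *
      ((((2*e+2*d+8).choose (e+3)) : ℝ) * m^(e+1))
      ≤ 2^d * (risingF m (2*e+d+6) * risingF m (e+d+3)) := by
  have he0 : (0:ℝ) ≤ e := Nat.cast_nonneg e
  have hd0 : (0:ℝ) ≤ d := Nat.cast_nonneg d
  have hapos : 0 < a := by linarith
  have hbpos : 0 < b := by linarith
  have hm : 4*(e:ℝ)+2*d+15 ≤ m := by linarith
  have hmpos : (0:ℝ) < m := by linarith
  have hbm : b ≤ m - (2*(e:ℝ)+d+8) := by linarith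
  -- positivity of the various shifted arguments
  have hP2pos : 0 < risingF (m-((e:ℝ)+4)) (d+1) := risingF_pos (by linarith) _
  have hBmargpos : (0:ℝ) < m-(2*(e:ℝ)+d+8) := by linarith
  have hBmpos : 0 < risingF (m-(2*(e:ℝ)+d+8)) (d+1) := risingF_pos hBmargpos _
  have hCb : (0:ℝ) < (((2*e+2*d+8).choose (e+3)) : ℝ) := by
    exact_mod_cast Nat.choose_pos (by omega)
  -- step h2
  have hmerge : risingF b (e+2*d+5) = risingF b (e+d+4) * risingF (b + ((e:ℝ)+d+4)) (d+1) :=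
    risingF_add_eq b _ (e+d+4) (d+1) _ (by omega) (by push_cast; ring)
  have h2 : risingF b (e+d+4) * risingF b (d+1) * risingF (m-((e:ℝ)+4)) (d+1)
      ≤ risingF b (e+2*d+5) * risingF (m-(2*(e:ℝ)+d+8)) (d+1) := by
    rw [hmerge, mul_assoc, mul_assoc]
    apply mul_le_mul_of_nonneg_left _ (risingF_pos hbpos _).le
    rw [risingF, risingF, risingF, risingF, ← Finset.prod_mul_distrib, ← Finset.prod_mul_distrib]
    apply Finset.prod_le_prod
    · intro i _
      have : (0:ℝ) ≤ i := Nat.cast_nonneg i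
      have h1 : (0:ℝ) ≤ b + i := by linarith
      have h2 : (0:ℝ) ≤ m-((e:ℝ)+4) + i := by linarith
      exact mul_nonneg h1 h2
    · intro i _
      have hi : (0:ℝ) ≤ i := Nat.cast_nonneg i
      nlinarith [mul_nonneg (show (0:ℝ) ≤ (e:ℝ)+d+4 by linarith)
        (show (0:ℝ) ≤ m - (2*(e:ℝ)+d+8) - b by linarith)]
  -- step h3
  have h3 : (((2*e+2*d+8).choose (e+3)) : ℝ) * (risingF a (e+3) * risingF b (e+2*d+5))
      ≤ risingF (m-1) (2*e+2*d+8) := by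
    have := vander a b hapos hbpos (2*e+2*d+8) (e+3) (e+2*d+5) (by omega)
    rwa [hab] at this
  -- step h5 decompositions
  have eL1 : risingF (m-1) (2*e+2*d+8)
      = risingF (m-1) (2*e+d+7) * risingF (m + (2*(e:ℝ)+d+6)) (d+1) :=
    risingF_add_eq _ _ (2*e+d+7) (d+1) _ (by omega) (by push_cast; ring)
  have eL2 : risingF (m-1) (2*e+d+7) = (m-1) * risingF m (2*e+d+6) :=
    risingF_succ'_eq _ _ (2*e+d+6) _ (by omega) (by ring)
  have eL3 : risingF (m + (2*(e:ℝ)+d+6)) (d+1)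
      = risingF (m + (2*(e:ℝ)+d+6)) d * ((m + (2*(e:ℝ)+d+6)) + d) :=
    risingF_succ_eq _ d (d+1) rfl
  have eBm : risingF (m-(2*(e:ℝ)+d+8)) (d+1)
      = (m-(2*(e:ℝ)+d+8)) * risingF (m-(2*(e:ℝ)+d+7)) d :=
    risingF_succ'_eq _ _ d (d+1) rfl (by ring)
  have eP2 : risingF (m-((e:ℝ)+4)) (d+1)
      = risingF (m-((e:ℝ)+4)) d * ((m-((e:ℝ)+4)) + d) :=
    risingF_succ_eq _ d (d+1) rfl
  have eE : risingF m (e+d+3) = risingF m (e+3) * risingF (m + ((e:ℝ)+3)) d :=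
    risingF_add_eq _ _ (e+3) d _ (by omega) (by push_cast; ring)
  have eEc1 : risingF m (e+3) = risingF m (e+2) * (m + ((e:ℝ)+2)) := by
    have := risingF_succ_eq m (e+2) (e+3) (by omega)
    rw [this]; push_cast; ring
  have eEc2 : risingF m (e+2) = m * risingF (m+1) (e+1) :=
    risingF_succ'_eq _ _ (e+1) (e+2) (by omega) rfl
  -- pieces
  have pi1 : risingF (m + (2*(e:ℝ)+d+6)) d ≤ 2^d * risingF (m-((e:ℝ)+4)) d := by
    have h2d : (2:ℝ)^d = ∏ _i ∈ Finset.range d, 2 := by simp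
    rw [h2d, risingF, risingF, ← Finset.prod_mul_distrib]
    apply Finset.prod_le_prod
    · intro i _
      have : (0:ℝ) ≤ i := Nat.cast_nonneg i
      linarith
    · intro i _
      have : (0:ℝ) ≤ i := Nat.cast_nonneg i
      linarith
  have pi2 : ((m + (2*(e:ℝ)+d+6)) + d) * (m-(2*(e:ℝ)+d+8))
      ≤ ((m-((e:ℝ)+4)) + d) * (m + ((e:ℝ)+2)) := by
    nlinarith [mul_nonneg he0 hd0, mul_nonneg he0 he0, mul_nonneg hd0 hd0]
  have pi3 : risingF (m-(2*(e:ℝ)+d+7)) d ≤ risingF (m + ((e:ℝ)+3)) d :=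
    risingF_mono (by linarith) (by linarith) d
  have pi4 : m^(e+1) ≤ risingF (m+1) (e+1) :=
    pow_le_risingF hmpos.le (by linarith) _
  -- nonnegativity helpers
  have hDm : (0:ℝ) ≤ risingF m (2*e+d+6) := (risingF_pos hmpos _).le
  have hP1 : (0:ℝ) ≤ risingF (m + (2*(e:ℝ)+d+6)) d := (risingF_pos (by linarith) _).le
  have hP2d : (0:ℝ) ≤ risingF (m-((e:ℝ)+4)) d := (risingF_pos (by linarith) _).le
  have hR2 : (0:ℝ) ≤ risingF (m-(2*(e:ℝ)+d+7)) d := (risingF_pos (by linarith) _).le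
  have hR5 : (0:ℝ) ≤ risingF (m + ((e:ℝ)+3)) d := (risingF_pos (by linarith) _).le
  have hR4 : (0:ℝ) ≤ risingF (m+1) (e+1) := (risingF_pos (by linarith) _).le
  -- assembling h5
  have g12 : (m-1) * risingF m (2*e+d+6) ≤ m * risingF m (2*e+d+6) :=
    mul_le_mul_of_nonneg_right (by linarith) hDm
  have g123 : (m-1) * risingF m (2*e+d+6) * risingF (m + (2*(e:ℝ)+d+6)) d
      ≤ m * risingF m (2*e+d+6) * (2^d * risingF (m-((e:ℝ)+4)) d) :=
    mul_le_mul g12 pi1 hP1 (by positivity)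
  have g1234 : (m-1) * risingF m (2*e+d+6) * risingF (m + (2*(e:ℝ)+d+6)) d
        * (((m + (2*(e:ℝ)+d+6)) + d) * (m-(2*(e:ℝ)+d+8)))
      ≤ m * risingF m (2*e+d+6) * (2^d * risingF (m-((e:ℝ)+4)) d)
        * (((m-((e:ℝ)+4)) + d) * (m + ((e:ℝ)+2))) := by
    apply mul_le_mul g123 pi2 _ _
    · have h1 : (0:ℝ) ≤ (m + (2*(e:ℝ)+d+6)) + d := by linarith
      have h2 : (0:ℝ) ≤ m-(2*(e:ℝ)+d+8) := by linarith
      exact mul_nonneg h1 h2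
    · have : (0:ℝ) ≤ (2:ℝ)^d := by positivity
      have h0 : (0:ℝ) ≤ (2:ℝ)^d * risingF (m-((e:ℝ)+4)) d := mul_nonneg this hP2d
      exact mul_nonneg (mul_nonneg hmpos.le hDm) h0
  have g12345 := mul_le_mul g1234 pi3 hR2 (by
    have h1 : (0:ℝ) ≤ ((m-((e:ℝ)+4)) + d) * (m + ((e:ℝ)+2)) := by
      apply mul_nonneg <;> linarith
    have h0 : (0:ℝ) ≤ (2:ℝ)^d * risingF (m-((e:ℝ)+4)) d :=
      mul_nonneg (by positivity) hP2d
    exact mul_nonneg (mul_nonneg (mul_nonneg hmpos.le hDm) h0) h1)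
  have g := mul_le_mul g12345 pi4 (by positivity) (by
    have h1 : (0:ℝ) ≤ ((m-((e:ℝ)+4)) + d) * (m + ((e:ℝ)+2)) := by
      apply mul_nonneg <;> linarith
    have h0 : (0:ℝ) ≤ (2:ℝ)^d * risingF (m-((e:ℝ)+4)) d :=
      mul_nonneg (by positivity) hP2d
    exact mul_nonneg (mul_nonneg (mul_nonneg (mul_nonneg hmpos.le hDm) h0) h1) hR5)
  have h5 : risingF (m-1) (2*e+2*d+8) * risingF (m-(2*(e:ℝ)+d+8)) (d+1) * m^(e+1)
      ≤ 2^d * (risingF m (2*e+d+6) * risingF m (e+d+3) * risingF (m-((e:ℝ)+4)) (d+1)) := by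
    calc risingF (m-1) (2*e+2*d+8) * risingF (m-(2*(e:ℝ)+d+8)) (d+1) * m^(e+1)
        = (m-1) * risingF m (2*e+d+6) * risingF (m + (2*(e:ℝ)+d+6)) d
            * (((m + (2*(e:ℝ)+d+6)) + d) * (m-(2*(e:ℝ)+d+8)))
            * risingF (m-(2*(e:ℝ)+d+7)) d * m^(e+1) := by
          rw [eL1, eL2, eL3, eBm]; ring
      _ ≤ m * risingF m (2*e+d+6) * (2^d * risingF (m-((e:ℝ)+4)) d)
            * (((m-((e:ℝ)+4)) + d) * (m + ((e:ℝ)+2)))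
            * risingF (m + ((e:ℝ)+3)) d * risingF (m+1) (e+1) := g
      _ = 2^d * (risingF m (2*e+d+6) * risingF m (e+d+3) * risingF (m-((e:ℝ)+4)) (d+1)) := by
          rw [eE, eEc1, eEc2, eP2]; ring
  -- combine everything
  have hAm : (0:ℝ) ≤ (((2*e+2*d+8).choose (e+3)) : ℝ) * risingF a (e+3) * m^(e+1) :=
    mul_nonneg (mul_nonneg hCb.le (risingF_pos hapos _).le) (by positivity)
  have big : (risingF a (e+3) * risingF b (e+d+4) * risingF b (d+1) *
      ((((2*e+2*d+8).choose (e+3)) : ℝ) * m^(e+1))) * risingF (m-((e:ℝ)+4)) (d+1)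
      ≤ (2^d * (risingF m (2*e+d+6) * risingF m (e+d+3))) * risingF (m-((e:ℝ)+4)) (d+1) := by
    calc (risingF a (e+3) * risingF b (e+d+4) * risingF b (d+1) *
        ((((2*e+2*d+8).choose (e+3)) : ℝ) * m^(e+1))) * risingF (m-((e:ℝ)+4)) (d+1)
        = ((((2*e+2*d+8).choose (e+3)) : ℝ) * risingF a (e+3) * m^(e+1))
            * (risingF b (e+d+4) * risingF b (d+1) * risingF (m-((e:ℝ)+4)) (d+1)) := by ring
      _ ≤ ((((2*e+2*d+8).choose (e+3)) : ℝ) * risingF a (e+3) * m^(e+1))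
            * (risingF b (e+2*d+5) * risingF (m-(2*(e:ℝ)+d+8)) (d+1)) :=
          mul_le_mul_of_nonneg_left h2 hAm
      _ = ((((2*e+2*d+8).choose (e+3)) : ℝ) * (risingF a (e+3) * risingF b (e+2*d+5)))
            * (risingF (m-(2*(e:ℝ)+d+8)) (d+1) * m^(e+1)) := by ring
      _ ≤ risingF (m-1) (2*e+2*d+8) * (risingF (m-(2*(e:ℝ)+d+8)) (d+1) * m^(e+1)) :=
          mul_le_mul_of_nonneg_right h3 (mul_nonneg hBmpos.le (by positivity))
      _ = risingF (m-1) (2*e+2*d+8) * risingF (m-(2*(e:ℝ)+d+8)) (d+1) * m^(e+1) := by ring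
      _ ≤ 2^d * (risingF m (2*e+d+6) * risingF m (e+d+3) * risingF (m-((e:ℝ)+4)) (d+1)) := h5
      _ = (2^d * (risingF m (2*e+d+6) * risingF m (e+d+3))) * risingF (m-((e:ℝ)+4)) (d+1) := by
          ring
  exact le_of_mul_le_mul_right big hP2pos

/-- The quantity `G_{s,r}` (eq:quadrantlike), with real arguments. -/
noncomputable def Gsr (s r : ℕ) (v k : ℝ) : ℝ :=
  risingF (v - k - s) (r / 2) * risingF (k - s) (s - r / 2 + 1) * risingF (k - s) (s - r + 1)
    / (risingF (v - 2 * s + 1) s * risingF (v - 2 * s + 1) (s - r / 2))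

/-- The logarithmic upper bound on `G_{s,r}` (eq:unslumbering). -/
theorem log_Gsr_bound (s r : ℕ) (hr : Even r) (hr6 : 6 ≤ r) (hrs : r ≤ s)
    (v k : ℤ) (hk : 2 * (s : ℤ) + 1 ≤ k) (hvk : 2 * (s : ℤ) + 1 ≤ v - k) :
    2 * Real.log (Gsr s r (v : ℝ) (k : ℝ))
      ≤ -((r : ℝ) - 4) * Real.log ((v : ℝ) - 2 * s + 1)
        - 2 * Real.log ((2 * s - r + 2).choose (r / 2) : ℝ)
        + 2 * ((s : ℝ) - r) * Real.log 2 := by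
  obtain ⟨c, rfl⟩ : ∃ c, r = c + c := hr
  obtain ⟨e, rfl⟩ : ∃ e, c = e + 3 := ⟨c - 3, by omega⟩
  obtain ⟨d, rfl⟩ : ∃ d, s = 2*(e+3) + d := ⟨s - 2*(e+3), by omega⟩
  unfold Gsr
  have i1 : ((e+3)+(e+3))/2 = e+3 := by omega
  rw [i1]
  rw [show (2*(e+3)+d) - (e+3) + 1 = e+d+4 by omega]
  rw [show (2*(e+3)+d) - ((e+3)+(e+3)) + 1 = d+1 by omega]
  rw [show (2*(e+3)+d) - (e+3) = e+d+3 by omega]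
  rw [show 2*(2*(e+3)+d) - ((e+3)+(e+3)) + 2 = 2*e+2*d+8 by omega]
  rw [show 2*(e+3)+d = 2*e+d+6 by omega]
  -- real-valued hypotheses
  have hk' : 2*(2*((e:ℝ)+3)+(d:ℝ)) + 1 ≤ (k : ℝ) := by
    have h0 : ((2 * ((2*(e+3)+d : ℕ) : ℤ) + 1 : ℤ) : ℝ) ≤ ((k : ℤ) : ℝ) := Int.cast_le.mpr hk
    push_cast at h0
    linarith
  have hvk' : 2*(2*((e:ℝ)+3)+(d:ℝ)) + 1 ≤ (v : ℝ) - (k : ℝ) := by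
    have h0 : ((2 * ((2*(e+3)+d : ℕ) : ℤ) + 1 : ℤ) : ℝ) ≤ (((v - k) : ℤ) : ℝ) := Int.cast_le.mpr hvk
    push_cast at h0
    linarith
  have hcast : ((2*e+d+6 : ℕ) : ℝ) = 2*(e:ℝ)+d+6 := by push_cast; ring
  have ha : 2*((e:ℝ)+3) + d + 1 ≤ (v:ℝ) - (k:ℝ) - ((2*e+d+6 : ℕ) : ℝ) := by
    rw [hcast]; linarith [hk']
  have hb : 2*((e:ℝ)+3) + d + 1 ≤ (k:ℝ) - ((2*e+d+6 : ℕ) : ℝ) := by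
    rw [hcast]; linarith
  have hab : ((v:ℝ) - (k:ℝ) - ((2*e+d+6 : ℕ) : ℝ)) + ((k:ℝ) - ((2*e+d+6 : ℕ) : ℝ))
      = ((v:ℝ) - 2*((2*e+d+6 : ℕ) : ℝ) + 1) - 1 := by ring
  have key := main_real e d _ _ _ ha hb hab
  -- positivity
  have hmpos : (0:ℝ) < (v:ℝ) - 2*((2*e+d+6 : ℕ) : ℝ) + 1 := by rw [hcast]; linarith
  have hapos : (0:ℝ) < (v:ℝ) - (k:ℝ) - ((2*e+d+6 : ℕ) : ℝ) := by
    have := ha; have h0 : (0:ℝ) ≤ e := Nat.cast_nonneg e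
    have h1 : (0:ℝ) ≤ d := Nat.cast_nonneg d; linarith
  have hbpos : (0:ℝ) < (k:ℝ) - ((2*e+d+6 : ℕ) : ℝ) := by
    have := hb; have h0 : (0:ℝ) ≤ e := Nat.cast_nonneg e
    have h1 : (0:ℝ) ≤ d := Nat.cast_nonneg d; linarith
  have hDE : (0:ℝ) < risingF ((v:ℝ) - 2*((2*e+d+6 : ℕ) : ℝ) + 1) (2*e+d+6)
      * risingF ((v:ℝ) - 2*((2*e+d+6 : ℕ) : ℝ) + 1) (e+d+3) :=
    mul_pos (risingF_pos hmpos _) (risingF_pos hmpos _)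
  have hCb : (0:ℝ) < (((2*e+2*d+8).choose (e+3)) : ℝ) := by
    exact_mod_cast Nat.choose_pos (by omega)
  have hCm : (0:ℝ) < (((2*e+2*d+8).choose (e+3)) : ℝ)
      * ((v:ℝ) - 2*((2*e+d+6 : ℕ) : ℝ) + 1)^(e+1) := by
    apply mul_pos hCb; positivity
  have hNpos : (0:ℝ) < risingF ((v:ℝ) - (k:ℝ) - ((2*e+d+6 : ℕ) : ℝ)) (e+3)
      * risingF ((k:ℝ) - ((2*e+d+6 : ℕ) : ℝ)) (e+d+4)
      * risingF ((k:ℝ) - ((2*e+d+6 : ℕ) : ℝ)) (d+1) :=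
    mul_pos (mul_pos (risingF_pos hapos _) (risingF_pos hbpos _)) (risingF_pos hbpos _)
  have hG : risingF ((v:ℝ) - (k:ℝ) - ((2*e+d+6 : ℕ) : ℝ)) (e+3)
      * risingF ((k:ℝ) - ((2*e+d+6 : ℕ) : ℝ)) (e+d+4)
      * risingF ((k:ℝ) - ((2*e+d+6 : ℕ) : ℝ)) (d+1)
      / (risingF ((v:ℝ) - 2*((2*e+d+6 : ℕ) : ℝ) + 1) (2*e+d+6)
        * risingF ((v:ℝ) - 2*((2*e+d+6 : ℕ) : ℝ) + 1) (e+d+3))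
      ≤ 2^d / ((((2*e+2*d+8).choose (e+3)) : ℝ)
        * ((v:ℝ) - 2*((2*e+d+6 : ℕ) : ℝ) + 1)^(e+1)) := by
    rw [div_le_div_iff₀ hDE hCm]
    exact key
  have hGpos : (0:ℝ) < risingF ((v:ℝ) - (k:ℝ) - ((2*e+d+6 : ℕ) : ℝ)) (e+3)
      * risingF ((k:ℝ) - ((2*e+d+6 : ℕ) : ℝ)) (e+d+4)
      * risingF ((k:ℝ) - ((2*e+d+6 : ℕ) : ℝ)) (d+1)
      / (risingF ((v:ℝ) - 2*((2*e+d+6 : ℕ) : ℝ) + 1) (2*e+d+6)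
        * risingF ((v:ℝ) - 2*((2*e+d+6 : ℕ) : ℝ) + 1) (e+d+3)) := div_pos hNpos hDE
  have hlog := Real.log_le_log hGpos hG
  rw [Real.log_div (by positivity) (ne_of_gt hCm), Real.log_mul (ne_of_gt hCb) (by positivity),
    Real.log_pow, Real.log_pow] at hlog
  push_cast at hlog ⊢
  linarith
end
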